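/- Assume that for every measurable set A, the function x ↦ μ(S_{x,α} ∩ A) is continuous on X. If f ∈ L²(X) and Δ_α f = g is continuous, then f is continuous. -/

import Mathlib

open MeasureTheory

/-- The slice `S_{x,α} = {t ∈ X : ∃ p, d(x,p) ≤ α ∧ d(t,p) ≤ α}`. -/
def alphaSlice {X : Type*} [MetricSpace X] (α : ℝ) (x : X) : Set X :=
  {t | ∃ p : X, dist x p ≤ α ∧ dist t p ≤ α}

/-- The `α`-scale Laplacian on `0`-forms:
`Δ_α f(x) = 2 μ(S_{x,α}) f(x) − 2 ∫_{S_{x,α}} f dμ`. -/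
noncomputable def lap0 {X : Type*} [MetricSpace X] [MeasurableSpace X]
    (μ : Measure X) (α : ℝ) (f : X → ℝ) (x : X) : ℝ :=
  2 * (μ (alphaSlice α x)).toReal * f x - 2 * ∫ t in alphaSlice α x, f t ∂μ

/-- Continuity of slice integrals of simple functions. -/
lemma continuous_slice_integral_simpleFunc
    {X : Type*} [MetricSpace X] [MeasurableSpace X] [BorelSpace X]
    (μ : Measure X) [IsProbabilityMeasure μ] (α : ℝ)
    (hcont : ∀ A : Set X, MeasurableSet A →
      Continuous fun x => (μ (alphaSlice α x ∩ A)).toReal)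
    (s : SimpleFunc X ℝ) :
    Continuous fun x => ∫ t in alphaSlice α x, s t ∂μ := by
  induction s using SimpleFunc.induction with
  | @const c A hA =>
    classical
    have hfun : A.piecewise (Function.const X c) (Function.const X 0)
        = A.indicator fun _ => c := by
      ext t; by_cases h : t ∈ A <;> simp [h, Set.piecewise, Set.indicator]
    have : (fun x => ∫ t in alphaSlice α x, (SimpleFunc.piecewise A hA
        (SimpleFunc.const X c) (SimpleFunc.const X 0)) t ∂μ)
        = fun x => (μ (alphaSlice α x ∩ A)).toReal * c := by
      funext x
      simp only [SimpleFunc.coe_piecewise, SimpleFunc.coe_const]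
      rw [hfun, setIntegral_indicator hA, setIntegral_const, smul_eq_mul, measureReal_def]
    rw [this]
    exact (hcont A hA).mul continuous_const
  | @add u v hdis ihu ihv =>
    have : (fun x => ∫ t in alphaSlice α x, (u + v) t ∂μ)
        = fun x => (∫ t in alphaSlice α x, u t ∂μ) + ∫ t in alphaSlice α x, v t ∂μ := by
      funext x
      simp only [SimpleFunc.coe_add, Pi.add_apply]
      exact integral_add (u.integrable_of_isFiniteMeasure.integrableOn)
        (v.integrable_of_isFiniteMeasure.integrableOn)
    rw [this]
    exact ihu.add ihv

/-- Continuity of slice integrals of `L¹` functions. -/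
lemma continuous_slice_integral
    {X : Type*} [MetricSpace X] [MeasurableSpace X] [BorelSpace X]
    (μ : Measure X) [IsProbabilityMeasure μ] (α : ℝ)
    (hcont : ∀ A : Set X, MeasurableSet A →
      Continuous fun x => (μ (alphaSlice α x ∩ A)).toReal)
    (f : X → ℝ) (hf : Integrable f μ) :
    Continuous fun x => ∫ t in alphaSlice α x, f t ∂μ := by
  have hf1 : MemLp f 1 μ := (memLp_one_iff_integrable).2 hf
  -- choose approximating simple functions
  have hex : ∀ n : ℕ, ∃ s : SimpleFunc X ℝ,
      eLpNorm (f - ⇑s) 1 μ < ENNReal.ofReal (1 / (n + 1)) := by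
    intro n
    have hne : ENNReal.ofReal (1 / ((n : ℝ) + 1)) ≠ 0 := by
      simp [ENNReal.ofReal_eq_zero, not_le]
      positivity
    obtain ⟨s, hs, _⟩ := hf1.exists_simpleFunc_eLpNorm_sub_lt (by simp) hne
    exact ⟨s, hs⟩
  choose s hs using hex
  -- uniform bound
  have hbound : ∀ (n : ℕ) (x : X),
      dist (∫ t in alphaSlice α x, f t ∂μ) (∫ t in alphaSlice α x, (s n) t ∂μ)
        ≤ (eLpNorm (f - ⇑(s n)) 1 μ).toReal := by
    intro n x
    have hint : Integrable (f - ⇑(s n)) μ := hf.sub (s n).integrable_of_isFiniteMeasure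
    rw [Real.dist_eq, ← integral_sub hf.integrableOn
      ((s n).integrable_of_isFiniteMeasure.integrableOn)]
    calc |∫ t in alphaSlice α x, (f t - (s n) t) ∂μ|
        ≤ ∫ t in alphaSlice α x, |f t - (s n) t| ∂μ := by
          simpa using norm_integral_le_integral_norm (μ := μ.restrict (alphaSlice α x))
            (f := fun t => f t - (s n) t)
      _ ≤ ∫ t, |f t - (s n) t| ∂μ := by
          apply integral_mono_measure Measure.restrict_le_self
            (Filter.Eventually.of_forall fun t => abs_nonneg _) hint.abs
      _ = (eLpNorm (f - ⇑(s n)) 1 μ).toReal := by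
          rw [eLpNorm_one_eq_lintegral_enorm,
            ← integral_norm_eq_lintegral_enorm hint.aestronglyMeasurable]
          simp [Real.norm_eq_abs]
  -- uniform convergence
  have htu : TendstoUniformly (fun n x => ∫ t in alphaSlice α x, (s n) t ∂μ)
      (fun x => ∫ t in alphaSlice α x, f t ∂μ) Filter.atTop := by
    rw [Metric.tendstoUniformly_iff]
    intro ε hε
    obtain ⟨N, hN⟩ := exists_nat_one_div_lt hε
    filter_upwards [Filter.eventually_ge_atTop N] with n hn x
    have h1 : (eLpNorm (f - ⇑(s n)) 1 μ).toReal < 1 / (n + 1) :=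
      ENNReal.toReal_lt_of_lt_ofReal (hs n)
    have h2 : (1 : ℝ) / (n + 1) ≤ 1 / (N + 1) := by
      apply one_div_le_one_div_of_le (by positivity)
      exact_mod_cast Nat.succ_le_succ hn
    calc dist (∫ t in alphaSlice α x, f t ∂μ) (∫ t in alphaSlice α x, (s n) t ∂μ)
        ≤ (eLpNorm (f - ⇑(s n)) 1 μ).toReal := hbound n x
      _ < ε := by linarith
  exact htu.continuous (Filter.Frequently.of_forall fun n =>
    continuous_slice_integral_simpleFunc μ α hcont (s n))

/-- Poisson regularity in degree 0: if `x ↦ μ(S_{x,α} ∩ A)`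
is continuous for every measurable set `A`, and `f ∈ L²(X)` satisfies
`Δ_α f = g` with `g` continuous, then `f` is continuous. -/
theorem poisson_regularity_zero_forms
    {X : Type*} [MetricSpace X] [CompactSpace X]
    [MeasurableSpace X] [BorelSpace X]
    (μ : Measure X) [IsProbabilityMeasure μ]
    (hμpos : ∀ U : Set X, IsOpen U → U.Nonempty → 0 < μ U)
    (α : ℝ) (hα : 0 < α)
    (hcont : ∀ A : Set X, MeasurableSet A →
      Continuous fun x => (μ (alphaSlice α x ∩ A)).toReal)
    (f g : X → ℝ) (hf : MemLp f 2 μ) (hg : Continuous g)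
    (heq : ∀ x, lap0 μ α f x = g x) :
    Continuous f := by
  have hfi : Integrable f μ :=
    memLp_one_iff_integrable.1 (hf.mono_exponent (by norm_num))
  set I : X → ℝ := fun x => ∫ t in alphaSlice α x, f t ∂μ with hI_def
  set m : X → ℝ := fun x => (μ (alphaSlice α x)).toReal with hm_def
  have hI : Continuous I := continuous_slice_integral μ α hcont f hfi
  have hm : Continuous m := by
    have := hcont Set.univ MeasurableSet.univ
    simpa [Set.inter_univ] using this
  have hmpos : ∀ x, 0 < m x := by
    intro x
    have hsub : Metric.ball x α ⊆ alphaSlice α x := fun t ht =>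
      ⟨x, by simp [hα.le], le_of_lt (by simpa [dist_comm] using ht)⟩
    have hpos : 0 < μ (alphaSlice α x) :=
      lt_of_lt_of_le (hμpos _ Metric.isOpen_ball ⟨x, by simp [hα]⟩) (measure_mono hsub)
    exact ENNReal.toReal_pos hpos.ne' (measure_ne_top μ _)
  have hfeq : f = fun x => (g x + 2 * I x) / (2 * m x) := by
    funext x
    have h := heq x
    unfold lap0 at h
    have hm0 : m x ≠ 0 := (hmpos x).ne'
    field_simp
    linarith [h]
  rw [hfeq]
  exact ((hg.add (continuous_const.mul hI)).div (continuous_const.mul hm)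
    (fun x => by have := hmpos x; positivity))
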